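/- arXiv:2509.14229 — 6 statements merged into one kernel-verified Lean document; each statement's English description precedes it below -/
import Mathlib

section
/- Let X₁ be the submatrix of the inverse of the augmented difference matrix D̃ consisting of its first n-1 columns, and P₂ = (1/n)𝟙𝟙^⊤. Then for every y ∈ ℝ^n and every k ∈ {1,…,n-1}, the k-th coordinate of X₁^⊤(I-P₂)y equals -∑_{i=1}^k (yᵢ - ȳ), i.e., the negative cumulative sum of the demeaned data up to index k. -/
open Matrix Finset

/-- The `k`-th coordinate of `X₁ᵀ (I - P₂) y` is the negative cumulative sum
of the demeaned data up to index `k`, where `X₁` consists of the first `n-1`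
columns of the inverse of the augmented difference matrix. -/
theorem X1_transpose_centered_is_neg_cusum (n : ℕ) (hn : 2 ≤ n)
    (Dtilde : Matrix (Fin n) (Fin n) ℝ)
    (hD : ∀ i j : Fin n, (i : ℕ) < n - 1 →
      Dtilde i j = if (j : ℕ) = (i : ℕ) then -1
        else if (j : ℕ) = (i : ℕ) + 1 then 1 else 0)
    (hones : ∀ i j : Fin n, (i : ℕ) = n - 1 → Dtilde i j = 1)
    (hinv : IsUnit Dtilde)
    (X₁ : Matrix (Fin n) (Fin (n - 1)) ℝ)
    (hX₁ : ∀ i k, X₁ i k = Dtilde⁻¹ i (Fin.castLE (Nat.sub_le n 1) k))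
    (P₂ : Matrix (Fin n) (Fin n) ℝ) (hP₂ : ∀ i j, P₂ i j = 1 / (n : ℝ))
    (y : Fin n → ℝ) (ybar : ℝ) (hybar : ybar = (1 / (n : ℝ)) * ∑ i, y i) :
    ∀ k : Fin (n - 1),
      (X₁ᵀ.mulVec ((1 - P₂).mulVec y)) k
        = -∑ i ∈ univ.filter (fun i : Fin n => (i : ℕ) ≤ (k : ℕ)), (y i - ybar) := by
  intro k
  have hn0 : (n : ℝ) ≠ 0 := Nat.cast_ne_zero.mpr (by omega)
  have hk : (k : ℕ) < n - 1 := k.isLt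
  set k' : Fin n := Fin.castLE (Nat.sub_le n 1) k with hk'def
  have hk'coe : (k' : ℕ) = (k : ℕ) := rfl
  set d : ℝ := ((n : ℝ) - 1 - (k : ℕ)) / n with hd
  set c : Fin n → ℝ := fun i => (if k' < i then 1 else 0) - d with hc
  have hsum_ind : ∑ i : Fin n, (if k' < i then (1:ℝ) else 0) = (n : ℝ) - 1 - (k : ℕ) := by
    rw [Finset.sum_boole]
    have : (univ.filter fun i : Fin n => k' < i) = Finset.Ioi k' := by
      ext i; simp
    rw [this, Fin.card_Ioi, hk'coe]
    have h1 : (k : ℕ) < n - 1 := hk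
    push_cast [Nat.cast_sub (by omega : (k:ℕ) ≤ n - 1), Nat.cast_sub (by omega : 1 ≤ n)]
    ring
  have hcsum : ∑ i : Fin n, c i = 0 := by
    simp only [hc, Finset.sum_sub_distrib, hsum_ind, Finset.sum_const, Finset.card_univ,
      Fintype.card_fin, nsmul_eq_mul, hd]
    field_simp
    ring
  have hDc : Dtilde.mulVec c = Pi.single k' 1 := by
    funext i
    by_cases hi : (i : ℕ) < n - 1
    · have hi1 : (i : ℕ) + 1 < n := by omega
      set i1 : Fin n := ⟨(i : ℕ) + 1, hi1⟩ with hi1def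
      have hrow : ∀ j, Dtilde i j = (if j = i then (-1:ℝ) else 0) + (if j = i1 then 1 else 0) := by
        intro j
        rw [hD i j hi]
        simp only [Fin.ext_iff, hi1def]
        split_ifs <;> first | ring1 | (exfalso; omega)
      have hms : Dtilde.mulVec c i = -c i + c i1 := by
        simp [Matrix.mulVec, dotProduct, hrow, add_mul, Finset.sum_add_distrib,
          ite_mul, zero_mul]
      rw [hms, Pi.single_apply]
      simp only [hc, Fin.lt_def, hk'coe, hi1def, Fin.ext_iff]
      split_ifs <;> first | ring1 | (exfalso; omega)
    · have hi' : (i : ℕ) = n - 1 := by omega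
      have hms : Dtilde.mulVec c i = ∑ j, c j := by
        simp [Matrix.mulVec, dotProduct, hones i _ hi']
      rw [hms, hcsum, Pi.single_apply]
      have : i ≠ k' := by
        intro h; rw [h] at hi'; omega
      simp [this]
  have hdet : IsUnit Dtilde.det := (Matrix.isUnit_iff_isUnit_det _).mp hinv
  have hone : Dtilde⁻¹ * Dtilde = 1 := Matrix.nonsing_inv_mul _ hdet
  have hcol : ∀ i, Dtilde⁻¹ i k' = c i := by
    intro i
    have h2 : Dtilde⁻¹.mulVec (Dtilde.mulVec c) = c := by
      rw [Matrix.mulVec_mulVec, hone, Matrix.one_mulVec]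
    rw [hDc] at h2
    have h3 := congrFun h2 i
    rw [Matrix.mulVec_single] at h3
    simpa using h3
  have hvi : ∀ i, ((1 - P₂).mulVec y) i = y i - ybar := by
    intro i
    have hp : P₂.mulVec y i = ybar := by
      simp [Matrix.mulVec, dotProduct, hP₂, hybar, Finset.mul_sum]
    rw [Matrix.sub_mulVec]
    simp [Matrix.one_mulVec, hp]
  have hvsum : ∑ i, (y i - ybar) = 0 := by
    rw [Finset.sum_sub_distrib, Finset.sum_const, Finset.card_univ, Fintype.card_fin,
      nsmul_eq_mul, hybar]
    field_simp
    ring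
  have hmain : (X₁ᵀ.mulVec ((1 - P₂).mulVec y)) k
      = ∑ i, c i * (y i - ybar) := by
    show ∑ i, X₁ᵀ k i * ((1 - P₂).mulVec y) i = _
    exact Finset.sum_congr rfl fun i _ => by
      rw [Matrix.transpose_apply, hX₁, hcol, hvi]
  rw [hmain]
  have hsplit : ∑ i, c i * (y i - ybar)
      = ∑ i ∈ univ.filter (fun i : Fin n => k' < i), (y i - ybar) - d * ∑ i, (y i - ybar) := by
    calc ∑ i, c i * (y i - ybar)
        = ∑ i, ((if k' < i then (1:ℝ) else 0) * (y i - ybar) - d * (y i - ybar)) := by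
          simp only [hc, sub_mul]
      _ = (∑ i, (if k' < i then (1:ℝ) else 0) * (y i - ybar)) - d * ∑ i, (y i - ybar) := by
          rw [Finset.sum_sub_distrib, Finset.mul_sum]
      _ = ∑ i ∈ univ.filter (fun i : Fin n => k' < i), (y i - ybar) - d * ∑ i, (y i - ybar) := by
          congr 1
          rw [Finset.sum_filter]
          exact Finset.sum_congr rfl fun i _ => by split_ifs <;> simp
  rw [hsplit, hvsum, mul_zero, sub_zero]
  have hpart := Finset.sum_filter_add_sum_filter_not (univ : Finset (Fin n))
    (fun i : Fin n => (i : ℕ) ≤ (k : ℕ)) (fun i => y i - ybar)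
  have hfe : univ.filter (fun i : Fin n => ¬ (i : ℕ) ≤ (k : ℕ))
      = univ.filter (fun i : Fin n => k' < i) := by
    apply Finset.filter_congr
    intro i _
    simp [Fin.lt_def, hk'coe]
  rw [hfe, hvsum] at hpart
  linarith
end

section
/- Equiangular direction update: let X_A ∈ ℝ^{n×m} and x_j ∈ ℝ^n with [X_A x_j] having full column rank. Set G = X_A^⊤X_A, u = X_A^⊤x_j, d = x_j^⊤x_j, τ = d - u^⊤G^{-1}u, and for signs s_A ∈ {±1}^m, s_k ∈ {±1}, define v_{old} = X_A G^{-1}s_A and v_{new} = [X_A x_j]([X_A x_j]^⊤[X_A x_j])^{-1}[s_A; s_k]. Then v_{new} - v_{old} = α·(I - P_A)x_j with α = τ^{-1}(s_k - u^⊤G^{-1}s_A), where P_A = X_A G^{-1}X_A^⊤. -/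
open Matrix

/-- Equiangular direction update for LARS: `v_new - v_old = α (I - P_A) x_j`
with `α = τ⁻¹ (s_k - uᵀ G⁻¹ s_A)`. -/
theorem equiangular_direction_update (n m : ℕ) (hn : 1 ≤ n) (hm : 1 ≤ m)
    (XA : Matrix (Fin n) (Fin m) ℝ) (xj : Fin n → ℝ)
    (Xfull : Matrix (Fin n) (Fin m ⊕ Fin 1) ℝ)
    (hXfull : Xfull = fun i k => Sum.elim (fun j => XA i j) (fun _ => xj i) k)
    (hfull : IsUnit (Xfullᵀ * Xfull))
    (G : Matrix (Fin m) (Fin m) ℝ) (hG : G = XAᵀ * XA) (hGunit : IsUnit G)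
    (u : Fin m → ℝ) (hu : u = XAᵀ.mulVec xj)
    (d : ℝ) (hd : d = xj ⬝ᵥ xj)
    (τ : ℝ) (hτ : τ = d - u ⬝ᵥ G⁻¹.mulVec u) (hτpos : 0 < τ)
    (sA : Fin m → ℝ) (hsA : ∀ i, sA i = 1 ∨ sA i = -1)
    (sk : ℝ) (hsk : sk = 1 ∨ sk = -1)
    (PA : Matrix (Fin n) (Fin n) ℝ) (hPA : PA = XA * G⁻¹ * XAᵀ)
    (vold vnew : Fin n → ℝ)
    (hvold : vold = XA.mulVec (G⁻¹.mulVec sA))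
    (hvnew : vnew = Xfull.mulVec ((Xfullᵀ * Xfull)⁻¹.mulVec (Sum.elim sA (fun _ => sk)))) :
    vnew - vold = (τ⁻¹ * (sk - u ⬝ᵥ G⁻¹.mulVec sA)) • ((1 - PA).mulVec xj) := by
  have hτne : τ ≠ 0 := ne_of_gt hτpos
  set y2 : ℝ := τ⁻¹ * (sk - u ⬝ᵥ G⁻¹.mulVec sA) with hy2
  set y1 : Fin m → ℝ := G⁻¹.mulVec sA - y2 • G⁻¹.mulVec u with hy1
  set y : Fin m ⊕ Fin 1 → ℝ := Sum.elim y1 (fun _ => y2) with hy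
  have hGdet : IsUnit G.det := (Matrix.isUnit_iff_isUnit_det G).mp hGunit
  have hGGinv : G * G⁻¹ = 1 := Matrix.mul_nonsing_inv G hGdet
  -- action of Xfull on block vectors
  have hX1 : ∀ (a : Fin m → ℝ) (c : ℝ),
      Xfull.mulVec (Sum.elim a fun _ => c) = XA.mulVec a + c • xj := by
    intro a c; funext i
    simp [hXfull, Matrix.mulVec, dotProduct, Fintype.sum_sum_type, mul_comm]
  have hX2 : ∀ z : Fin n → ℝ,
      Xfullᵀ.mulVec z = Sum.elim (XAᵀ.mulVec z) (fun _ => xj ⬝ᵥ z) := by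
    intro z; funext k
    cases k with
    | inl i =>
      simp [hXfull, Matrix.mulVec, dotProduct, Matrix.transpose_apply, Matrix.transpose]
    | inr i =>
      simp [hXfull, Matrix.mulVec, dotProduct, Matrix.transpose]
  have hGinvu : G.mulVec (G⁻¹.mulVec u) = u := by
    rw [Matrix.mulVec_mulVec, hGGinv, Matrix.one_mulVec]
  have hGinvsA : G.mulVec (G⁻¹.mulVec sA) = sA := by
    rw [Matrix.mulVec_mulVec, hGGinv, Matrix.one_mulVec]
  -- Xfull applied to y
  have hz : Xfull.mulVec y = XA.mulVec y1 + y2 • xj := hX1 y1 y2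
  -- XAᵀ applied to Xfull y gives sA
  have hcomp1 : XAᵀ.mulVec (Xfull.mulVec y) = sA := by
    rw [hz, Matrix.mulVec_add, Matrix.mulVec_smul, ← hu, Matrix.mulVec_mulVec, ← hG,
      hy1, Matrix.mulVec_sub, Matrix.mulVec_smul, hGinvu, hGinvsA]
    abel
  have hudot : u ⬝ᵥ G⁻¹.mulVec u = d - τ := by rw [hτ]; ring
  have hcomp2 : xj ⬝ᵥ (Xfull.mulVec y) = sk := by
    rw [hz, dotProduct_add, dotProduct_smul, ← hd, Matrix.dotProduct_mulVec,
      ← Matrix.mulVec_transpose, ← hu, hy1, dotProduct_sub, dotProduct_smul, hudot]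
    have : y2 * τ = sk - u ⬝ᵥ G⁻¹.mulVec sA := by
      rw [hy2]; field_simp
    simp only [smul_eq_mul]
    nlinarith [this]
  have hMy : (Xfullᵀ * Xfull).mulVec y = Sum.elim sA (fun _ => sk) := by
    rw [← Matrix.mulVec_mulVec, hX2, hcomp1, hcomp2]
  have hyval : (Xfullᵀ * Xfull)⁻¹.mulVec (Sum.elim sA (fun _ => sk)) = y := by
    rw [← hMy, Matrix.mulVec_mulVec,
      Matrix.nonsing_inv_mul _ ((Matrix.isUnit_iff_isUnit_det _).mp hfull),
      Matrix.one_mulVec]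
  have hPAxj : PA.mulVec xj = XA.mulVec (G⁻¹.mulVec u) := by
    rw [hPA, hu, ← Matrix.mulVec_mulVec, ← Matrix.mulVec_mulVec]
  rw [hvnew, hvold, hyval, hz, hy1, Matrix.mulVec_sub, Matrix.mulVec_smul,
    Matrix.sub_mulVec, Matrix.one_mulVec, hPAxj]
  funext i
  simp only [Pi.add_apply, Pi.sub_apply, Pi.smul_apply, smul_eq_mul]
  ring
end

section
/- With the notation of the equiangular update, the squared norm of the difference of equiangular directions satisfies ‖v_{new} - v_{old}‖₂² = (s_k - u^⊤G^{-1}s_A)² / (x_j^⊤(I-P_A)x_j), provided s_k - u^⊤G^{-1}s_A ≠ 0. -/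
open Matrix

/-- Squared norm of the difference of equiangular directions:
`‖v_new - v_old‖₂² = (s_k - uᵀ G⁻¹ s_A)² / (x_jᵀ (I - P_A) x_j)`. -/
theorem equiangular_difference_norm_sq (n m : ℕ) (hn : 1 ≤ n) (hm : 1 ≤ m)
    (XA : Matrix (Fin n) (Fin m) ℝ) (xj : Fin n → ℝ)
    (Xfull : Matrix (Fin n) (Fin m ⊕ Fin 1) ℝ)
    (hXfull : Xfull = fun i k => Sum.elim (fun j => XA i j) (fun _ => xj i) k)
    (hfull : IsUnit (Xfullᵀ * Xfull))
    (G : Matrix (Fin m) (Fin m) ℝ) (hG : G = XAᵀ * XA) (hGunit : IsUnit G)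
    (u : Fin m → ℝ) (hu : u = XAᵀ.mulVec xj)
    (PA : Matrix (Fin n) (Fin n) ℝ) (hPA : PA = XA * G⁻¹ * XAᵀ)
    (hproj : (1 - PA).mulVec xj ≠ 0)
    (sA : Fin m → ℝ) (hsA : ∀ i, sA i = 1 ∨ sA i = -1)
    (sk : ℝ) (hsk : sk = 1 ∨ sk = -1)
    (hden : sk - u ⬝ᵥ G⁻¹.mulVec sA ≠ 0)
    (vold vnew : Fin n → ℝ)
    (hvold : vold = XA.mulVec (G⁻¹.mulVec sA))
    (hvnew : vnew = Xfull.mulVec ((Xfullᵀ * Xfull)⁻¹.mulVec (Sum.elim sA (fun _ => sk)))) :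
    (vnew - vold) ⬝ᵥ (vnew - vold)
      = (sk - u ⬝ᵥ G⁻¹.mulVec sA) ^ 2 / (xj ⬝ᵥ (1 - PA).mulVec xj) := by
  -- basic invertibility facts
  have hGdet : IsUnit G.det := (Matrix.isUnit_iff_isUnit_det G).mp hGunit
  have hGG : G * G⁻¹ = 1 := Matrix.mul_nonsing_inv G hGdet
  have hGG' : G⁻¹ * G = 1 := Matrix.nonsing_inv_mul G hGdet
  have hGsymm : Gᵀ = G := by rw [hG]; simp [Matrix.transpose_mul]
  have hGinvsymm : (G⁻¹)ᵀ = G⁻¹ := by rw [Matrix.transpose_nonsing_inv, hGsymm]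
  have hPAsymm : PAᵀ = PA := by
    rw [hPA]; simp [Matrix.transpose_mul, hGinvsymm, Matrix.mul_assoc]
  -- the residual
  set r : Fin n → ℝ := xj - PA.mulVec xj with hr
  have hres : (1 - PA).mulVec xj = r := by
    rw [Matrix.sub_mulVec, Matrix.one_mulVec]
  have hrne : r ≠ 0 := by rw [← hres]; exact hproj
  -- XAᵀ r = 0
  have hkey : XAᵀ * PA = XAᵀ := by
    rw [hPA, ← Matrix.mul_assoc, ← Matrix.mul_assoc, ← hG, hGG, Matrix.one_mul]
  have hXAr : XAᵀ.mulVec r = 0 := by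
    rw [hr, Matrix.mulVec_sub, Matrix.mulVec_mulVec, hkey, sub_self]
  have hPAr : PA.mulVec r = 0 := by
    rw [hPA, ← Matrix.mulVec_mulVec, ← Matrix.mulVec_mulVec, hXAr, Matrix.mulVec_zero,
      Matrix.mulVec_zero]
  -- d and its properties
  set d : ℝ := xj ⬝ᵥ r with hdd
  have hPAxr : PA.mulVec xj ⬝ᵥ r = 0 := by
    rw [dotProduct_comm, Matrix.dotProduct_mulVec, ← Matrix.mulVec_transpose, hPAsymm, hPAr,
      zero_dotProduct]
  have hdr : r ⬝ᵥ r = d := by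
    rw [hr]; rw [show (xj - PA.mulVec xj) ⬝ᵥ r = xj ⬝ᵥ r - PA.mulVec xj ⬝ᵥ r from
      sub_dotProduct _ _ _, hPAxr, sub_zero]
  have hd0 : d ≠ 0 := by
    intro h
    exact hrne ((dotProduct_self_eq_zero).mp (by rw [hdr, h]))
  -- PA xj = XA (G⁻¹ u)
  have hPAxj : PA.mulVec xj = XA.mulVec (G⁻¹.mulVec u) := by
    rw [hPA, hu, ← Matrix.mulVec_mulVec, ← Matrix.mulVec_mulVec]
  set α : ℝ := sk - u ⬝ᵥ G⁻¹.mulVec sA with hα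
  -- the candidate solution w
  set t : Fin m → ℝ := G⁻¹.mulVec sA - (α / d) • G⁻¹.mulVec u with ht
  set w : Fin m ⊕ Fin 1 → ℝ := Sum.elim t (fun _ => α / d) with hw
  -- action of Xfull on Sum.elim vectors
  have hXmul : ∀ (a : Fin m → ℝ) (c : ℝ),
      Xfull.mulVec (Sum.elim a fun _ => c) = XA.mulVec a + c • xj := by
    intro a c
    funext i
    simp [hXfull, Matrix.mulVec, dotProduct, Fintype.sum_sum_type, mul_comm]
  have hXTmul : ∀ (y : Fin n → ℝ),
      Xfullᵀ.mulVec y = Sum.elim (XAᵀ.mulVec y) (fun _ => xj ⬝ᵥ y) := by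
    intro y
    funext k
    cases k with
    | inl j => simp [hXfull, Matrix.mulVec, dotProduct, Matrix.transpose_apply, Matrix.transpose]
    | inr j => simp [hXfull, Matrix.mulVec, dotProduct, Matrix.transpose_apply, Matrix.transpose, mul_comm]
  -- Xfull w
  have hy : Xfull.mulVec w = vold + (α / d) • r := by
    rw [hw, hXmul, ht, Matrix.mulVec_sub, Matrix.mulVec_smul, hvold, hr, ← hPAxj]
    abel_nf
    module
  -- M w = s
  have hMw : (Xfullᵀ * Xfull).mulVec w = Sum.elim sA (fun _ => sk) := by
    rw [← Matrix.mulVec_mulVec, hy, hXTmul]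
    have hA : XAᵀ.mulVec (vold + (α / d) • r) = sA := by
      rw [Matrix.mulVec_add, Matrix.mulVec_smul, hXAr, smul_zero, add_zero, hvold,
        Matrix.mulVec_mulVec, Matrix.mulVec_mulVec, ← hG, hGG, Matrix.one_mulVec]
    have h1 : xj ⬝ᵥ vold = u ⬝ᵥ G⁻¹.mulVec sA := by
      rw [hvold, Matrix.dotProduct_mulVec, ← Matrix.mulVec_transpose, ← hu]
    have h2 : xj ⬝ᵥ ((α / d) • r) = α := by
      rw [dotProduct_smul, ← hdd, smul_eq_mul, div_mul_cancel₀ _ hd0]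
    have hB : xj ⬝ᵥ (vold + (α / d) • r) = sk := by
      rw [dotProduct_add, h1, h2, hα]; ring
    simp only [hA, hB]
  -- conclude vnew
  have hMdet : IsUnit (Xfullᵀ * Xfull).det := (Matrix.isUnit_iff_isUnit_det _).mp hfull
  have hwinv : (Xfullᵀ * Xfull)⁻¹.mulVec (Sum.elim sA fun _ => sk) = w := by
    rw [← hMw, Matrix.mulVec_mulVec, Matrix.nonsing_inv_mul _ hMdet, Matrix.one_mulVec]
  have hvnew' : vnew = vold + (α / d) • r := by rw [hvnew, hwinv, hy]
  have hdiff : vnew - vold = (α / d) • r := by rw [hvnew']; abel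
  rw [hdiff, hres, smul_dotProduct, dotProduct_smul, hdr, ← hdd, smul_eq_mul, smul_eq_mul]
  field_simp
end

section
/- Truncated normal CDF pivot: let Z ~ N(μ, σ²) with σ > 0, and a < b real numbers with P(a ≤ Z ≤ b) > 0. Define F(x) = (Φ((x-μ)/σ) - Φ((a-μ)/σ)) / (Φ((b-μ)/σ) - Φ((a-μ)/σ)) for x ∈ [a,b]. Then, conditional on the event {a ≤ Z ≤ b}, the random variable F(Z) is uniformly distributed on [0,1]. -/
open MeasureTheory ProbabilityTheory
open scoped ProbabilityTheory

/-- Truncated normal CDF pivot: conditional on `{a ≤ Z ≤ b}`, the random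
variable `F(Z)` is uniform on `[0,1]`, where `F` is the truncated normal CDF. -/
theorem truncated_normal_cdf_pivot (μ σ a b : ℝ) (hσ : 0 < σ) (hab : a < b)
    (P : Measure ℝ) (hP : P = gaussianReal μ (Real.toNNReal (σ ^ 2)))
    (hpos : 0 < P (Set.Icc a b))
    (Φ : ℝ → ℝ) (hΦ : Φ = fun t => cdf (gaussianReal 0 1) t)
    (F : ℝ → ℝ)
    (hF : F = fun x =>
      (Φ ((x - μ) / σ) - Φ ((a - μ) / σ)) / (Φ ((b - μ) / σ) - Φ ((a - μ) / σ))) :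
    (P[|Set.Icc a b]).map F = volume.restrict (Set.Icc (0 : ℝ) 1) := by
  have hv : (Real.toNNReal (σ ^ 2)) ≠ 0 := by
    simp only [ne_eq, Real.toNNReal_eq_zero, not_le]
    positivity
  set G := gaussianReal 0 1 with hG
  haveI : IsProbabilityMeasure P := by rw [hP]; infer_instance
  -- monotonicity of Φ
  have hΦ_mono : Monotone Φ := by rw [hΦ]; exact monotone_cdf _
  -- continuity of Φ
  have hΦcont : Continuous Φ := by
    rw [hΦ]
    rw [continuous_iff_continuousAt]
    intro x
    have hm := (cdf G).mono
    have : ContinuousAt (cdf G) x := by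
      rw [hm.continuousAt_iff_leftLim_eq_rightLim]
      have h0 : (cdf G).measure {x} = 0 := by
        rw [measure_cdf]
        exact (gaussianReal_absolutelyContinuous 0 one_ne_zero) (Real.volume_singleton)
      rw [StieltjesFunction.measure_singleton] at h0
      have h1 := hm.leftLim_le (le_refl x)
      have h2 : cdf G x ≤ Function.leftLim (cdf G) x := by
        have := ENNReal.ofReal_eq_zero.1 h0; linarith
      rw [le_antisymm h1 h2, (cdf G).rightLim_eq]
    exact this
  -- strict monotonicity of Φ
  have hΦ_strict : StrictMono Φ := by
    intro s t hst
    rcases lt_or_ge (Φ s) (Φ t) with h | h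
    · exact h
    exfalso
    have heq : Φ s = Φ t := le_antisymm (hΦ_mono hst.le) h
    have hiic : ∀ u : ℝ, G (Set.Iic u) = ENNReal.ofReal (Φ u) := by
      intro u; rw [hΦ]; exact (ofReal_cdf _ _).symm
    have h1 : G (Set.Ioc s t) = 0 := by
      rw [← Set.Iic_sdiff_Iic,
        measure_diff (Set.Iic_subset_Iic.2 hst.le) measurableSet_Iic.nullMeasurableSet
          (measure_ne_top _ _), hiic, hiic, heq, tsub_self]
    have h2 := (gaussianReal_absolutelyContinuous' 0 one_ne_zero) h1
    rw [Real.volume_Ioc] at h2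
    simp only [ENNReal.ofReal_eq_zero, sub_nonpos] at h2
    exact absurd h2 (not_le.2 hst)
  -- CDF of P
  have hIic : ∀ t : ℝ, P (Set.Iic t) = ENNReal.ofReal (Φ ((t - μ) / σ)) := by
    intro t
    have h1 : P = G.map (fun x => σ * x + μ) := by
      rw [hP]
      have h2 : ((G.map (σ * ·)).map (· + μ)) = gaussianReal μ (Real.toNNReal (σ ^ 2)) := by
        rw [hG, gaussianReal_map_const_mul, gaussianReal_map_add_const]
        congr 1
        · ring
        · ext
          simp [Real.coe_toNNReal _ (sq_nonneg σ)]
      rw [← h2, Measure.map_map (g := fun x : ℝ => x + μ) (f := fun x : ℝ => σ * x)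
        (by fun_prop) (by fun_prop)]
      rfl
    rw [h1, Measure.map_apply (f := fun x : ℝ => σ * x + μ) (by fun_prop) measurableSet_Iic]
    have hpre : (fun x => σ * x + μ) ⁻¹' Set.Iic t = Set.Iic ((t - μ) / σ) := by
      ext x
      simp only [Set.mem_preimage, Set.mem_Iic]
      rw [le_div_iff₀ hσ]
      constructor <;> intro h <;> nlinarith
    rw [hpre, hΦ]
    exact (ofReal_cdf _ _).symm
  -- no atoms
  haveI : NullSingletonClass P := by
    constructor
    intro x
    rw [hP]
    exact (gaussianReal_absolutelyContinuous μ hv) (Real.volume_singleton)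
  -- measure of intervals
  have hIcc : ∀ s t : ℝ, s ≤ t →
      P (Set.Icc s t) = ENNReal.ofReal (Φ ((t - μ) / σ) - Φ ((s - μ) / σ)) := by
    intro s t hst
    rw [← measure_congr (Ioc_ae_eq_Icc (μ := P) (a := s) (b := t)), ← Set.Iic_sdiff_Iic,
      measure_diff (Set.Iic_subset_Iic.2 hst) measurableSet_Iic.nullMeasurableSet
        (measure_ne_top _ _), hIic, hIic,
      ENNReal.ofReal_sub _ (by rw [hΦ]; exact cdf_nonneg _ _)]
  -- key quantities
  have hab' : (a - μ) / σ < (b - μ) / σ := by gcongr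
  have hd : 0 < Φ ((b - μ) / σ) - Φ ((a - μ) / σ) := sub_pos.2 (hΦ_strict hab')
  have hPab : P (Set.Icc a b) = ENNReal.ofReal (Φ ((b - μ) / σ) - Φ ((a - μ) / σ)) :=
    hIcc a b hab.le
  -- F properties
  have hFa : F a = 0 := by rw [hF]; simp
  have hFb : F b = 1 := by rw [hF]; simp [div_self hd.ne']
  have hF_strict : StrictMono F := by
    intro x y hxy
    rw [hF]
    dsimp only
    rw [div_lt_div_iff_of_pos_right hd]
    have : Φ ((x - μ) / σ) < Φ ((y - μ) / σ) := hΦ_strict (by gcongr)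
    linarith
  have hF_mono : Monotone F := hF_strict.monotone
  have hFmeas : Measurable F := hF_mono.measurable
  have hFcont : Continuous F := by
    rw [hF]
    fun_prop
  haveI : IsProbabilityMeasure (P[|Set.Icc a b]) :=
    cond_isProbabilityMeasure hpos.ne'
  haveI : IsProbabilityMeasure ((P[|Set.Icc a b]).map F) :=
    Measure.isProbabilityMeasure_map hFmeas.aemeasurable
  refine Measure.ext_of_Iic _ _ (fun x => ?_)
  rw [Measure.map_apply hFmeas measurableSet_Iic, Measure.restrict_apply measurableSet_Iic,
    cond_apply measurableSet_Icc]
  rcases lt_or_ge x 0 with hx0 | hx0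
  · have h1 : Set.Icc a b ∩ F ⁻¹' Set.Iic x = ∅ := by
      rw [Set.eq_empty_iff_forall_notMem]
      rintro z ⟨hz, hzx⟩
      have h0 : (0 : ℝ) ≤ F z := hFa ▸ hF_mono hz.1
      have h0' : F z ≤ x := hzx
      linarith
    have h2 : Set.Iic x ∩ Set.Icc (0 : ℝ) 1 = ∅ := by
      rw [Set.eq_empty_iff_forall_notMem]
      rintro z ⟨hz1, hz2⟩
      have h0 : z ≤ x := hz1
      have h0' : (0 : ℝ) ≤ z := hz2.1
      linarith
    rw [h1, h2]
    simp
  rcases le_or_gt x 1 with hx1 | hx1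
  · -- main case : 0 ≤ x ≤ 1
    obtain ⟨t, ht, hFt⟩ : ∃ t ∈ Set.Icc a b, F t = x := by
      have := intermediate_value_Icc hab.le hFcont.continuousOn
      have hx : x ∈ Set.Icc (F a) (F b) := by rw [hFa, hFb]; exact ⟨hx0, hx1⟩
      exact this hx
    have h1 : Set.Icc a b ∩ F ⁻¹' Set.Iic x = Set.Icc a t := by
      ext z
      simp only [Set.mem_inter_iff, Set.mem_Icc, Set.mem_preimage, Set.mem_Iic]
      constructor
      · rintro ⟨⟨hz1, hz2⟩, hz3⟩
        refine ⟨hz1, ?_⟩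
        rw [← hFt] at hz3
        exact (hF_strict.le_iff_le).1 hz3
      · rintro ⟨hz1, hz2⟩
        refine ⟨⟨hz1, hz2.trans ht.2⟩, ?_⟩
        rw [← hFt]
        exact hF_mono hz2
    have h2 : Set.Iic x ∩ Set.Icc (0 : ℝ) 1 = Set.Icc 0 x := by
      ext z
      simp only [Set.mem_inter_iff, Set.mem_Iic, Set.mem_Icc]
      constructor
      · rintro ⟨hz1, hz2, _⟩; exact ⟨hz2, hz1⟩
      · rintro ⟨hz1, hz2⟩; exact ⟨hz2, hz1, hz2.trans hx1⟩
    rw [h1, h2, Real.volume_Icc, hIcc a t ht.1, hPab]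
    have hnum : Φ ((t - μ) / σ) - Φ ((a - μ) / σ)
        = x * (Φ ((b - μ) / σ) - Φ ((a - μ) / σ)) := by
      rw [hF] at hFt
      dsimp only at hFt
      field_simp at hFt
      linarith
    rw [hnum, ENNReal.ofReal_mul hx0, ← mul_assoc, mul_comm (ENNReal.ofReal _)⁻¹,
      mul_assoc, ENNReal.inv_mul_cancel (by simpa using hd) ENNReal.ofReal_ne_top,
      mul_one, sub_zero]
  · -- case 1 < x
    have h1 : Set.Icc a b ∩ F ⁻¹' Set.Iic x = Set.Icc a b := by
      ext z
      simp only [Set.mem_inter_iff, Set.mem_Icc, Set.mem_preimage, Set.mem_Iic,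
        and_iff_left_iff_imp]
      rintro ⟨hz1, hz2⟩
      have h0 : F z ≤ 1 := hFb ▸ hF_mono hz2
      linarith
    have h2 : Set.Iic x ∩ Set.Icc (0 : ℝ) 1 = Set.Icc 0 1 := by
      ext z
      simp only [Set.mem_inter_iff, Set.mem_Iic, Set.mem_Icc, and_iff_right_iff_imp]
      rintro ⟨hz1, hz2⟩
      linarith
    rw [h1, h2, Real.volume_Icc,
      ENNReal.inv_mul_cancel hpos.ne' (measure_ne_top _ _)]
    norm_num
end

section
/- Polyhedral lemma: let A ∈ ℝ^{m×n}, b ∈ ℝ^m, η ∈ ℝ^n nonzero, c = η/‖η‖₂², and for y ∈ ℝ^n set z = (I - cη^⊤)y. Then {y : Ay ≤ b} = {y : ν⁻(z) ≤ η^⊤y ≤ ν⁺(z) and ν⁰(z) ≥ 0}, where ν⁻(z) = max over j with (Ac)_j < 0 of (b_j - (Az)_j)/(Ac)_j, ν⁺(z) = min over j with (Ac)_j > 0 of (b_j - (Az)_j)/(Ac)_j, and ν⁰(z) = min over j with (Ac)_j = 0 of b_j - (Az)_j (taking max/min over empty sets as -∞/+∞ as appropriate). -/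
open Matrix

/-- Polyhedral lemma: with `c = η/‖η‖²` and `z = y - (ηᵀy) c`, the polyhedron
`{Ay ≤ b}` is described by `ν⁻(z) ≤ ηᵀy ≤ ν⁺(z)` and `ν⁰(z) ≥ 0`, stated
pointwise over the rows (which handles empty index sets as `±∞`). -/
theorem polyhedral_lemma (m n : ℕ) (A : Matrix (Fin m) (Fin n) ℝ) (b : Fin m → ℝ)
    (η : Fin n → ℝ) (hη : η ≠ 0)
    (c : Fin n → ℝ) (hc : c = (∑ i, η i ^ 2)⁻¹ • η) (y : Fin n → ℝ)
    (z : Fin n → ℝ) (hz : z = y - (η ⬝ᵥ y) • c) :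
    A.mulVec y ≤ b ↔
      ((∀ j, (A.mulVec c) j < 0 →
          (b j - (A.mulVec z) j) / (A.mulVec c) j ≤ η ⬝ᵥ y) ∧
       (∀ j, 0 < (A.mulVec c) j →
          η ⬝ᵥ y ≤ (b j - (A.mulVec z) j) / (A.mulVec c) j) ∧
       (∀ j, (A.mulVec c) j = 0 → 0 ≤ b j - (A.mulVec z) j)) := by
  have key : ∀ j, A.mulVec y j = A.mulVec z j + (η ⬝ᵥ y) * A.mulVec c j := by
    intro j
    have hy : y = z + (η ⬝ᵥ y) • c := by rw [hz]; abel
    conv_lhs => rw [hy]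
    rw [mulVec_add, mulVec_smul]
    simp [smul_eq_mul]
  constructor
  · intro h
    refine ⟨fun j hj => ?_, fun j hj => ?_, fun j hj => ?_⟩
    · rw [div_le_iff_of_neg hj]
      have := h j
      rw [key j] at this
      linarith
    · rw [le_div_iff₀ hj]
      have := h j
      rw [key j] at this
      linarith
    · have := h j
      rw [key j, hj] at this
      linarith
  · rintro ⟨h1, h2, h3⟩ j
    rw [key j]
    rcases lt_trichotomy (A.mulVec c j) 0 with hj | hj | hj
    · have := h1 j hj
      rw [div_le_iff_of_neg hj] at this
      linarith
    · have := h3 j hj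
      rw [hj]
      linarith
    · have := h2 j hj
      rw [le_div_iff₀ hj] at this
      linarith
end

section
/- First knot of the fused-lasso path via CUSUM: for y ∈ ℝ^n, the largest λ for which the fused lasso solution argmin_μ ½‖y-μ‖² + λ‖Dμ‖₁ is constant (μ̂_1 = … = μ̂_n = ȳ) equals λ₁ = max_{1≤k≤n-1} |∑_{i=1}^k (y_i - ȳ)|. -/
open Finset

private lemma abel_aux (n : ℕ) (a m : ℕ → ℝ) (h : ∑ i ∈ range n, a i = 0) :
    ∑ i ∈ range n, a i * m i
      = -∑ j ∈ range (n - 1), (∑ i ∈ range (j + 1), a i) * (m (j + 1) - m j) := by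
  have hbp := Finset.sum_range_by_parts m a n
  simp only [smul_eq_mul, h, mul_zero] at hbp
  calc ∑ i ∈ range n, a i * m i = ∑ i ∈ range n, m i * a i := by
        simp [mul_comm]
    _ = _ := by
        rw [hbp, zero_sub, neg_inj]
        exact Finset.sum_congr rfl fun j _ => by ring

private lemma filter_aux (n kv : ℕ) (hk : kv < n) (g : Fin n → ℝ)  :
    ∑ i ∈ univ.filter (fun i : Fin n => (i : ℕ) ≤ kv), g i
      = ∑ i ∈ range (kv + 1), (if h : i < n then g ⟨i, h⟩ else 0) := by
  rw [Finset.sum_filter]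
  have h1 : ∀ a : Fin n, (if (a : ℕ) ≤ kv then g a else 0)
      = (fun i : ℕ => if i ≤ kv then (if h : i < n then g ⟨i, h⟩ else 0) else 0) (a : ℕ) := by
    intro a; simp [a.isLt]
  rw [Finset.sum_congr rfl fun a _ => h1 a,
    Fin.sum_univ_eq_sum_range (fun i : ℕ => if i ≤ kv then (if h : i < n then g ⟨i, h⟩ else 0) else 0) n,
    ← Finset.sum_subset (Finset.range_subset_range.2 hk)]
  · exact Finset.sum_congr rfl fun i hi => if_pos (Nat.lt_succ_iff.mp (mem_range.mp hi))
  · intro i _ hi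
    exact if_neg (fun hle => hi (mem_range.mpr (Nat.lt_succ_iff.mpr hle)))

private lemma key_identity (n : ℕ) (hn : 2 ≤ n) (y : Fin n → ℝ) (ybar : ℝ)
    (ha : ∑ i, (y i - ybar) = 0) (lam : ℝ) (μ : Fin n → ℝ) :
    (1 / 2) * ∑ i, (y i - μ i) ^ 2
      + lam * ∑ j : Fin (n - 1),
          |μ ⟨(j : ℕ) + 1, Nat.add_lt_of_lt_sub j.isLt⟩ - μ (Fin.castLE (Nat.sub_le n 1) j)|
    = (1 / 2) * ∑ i, (y i - ybar) ^ 2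
      + ((1 / 2) * ∑ i, (μ i - ybar) ^ 2
      + ∑ j : Fin (n - 1),
          (lam * |μ ⟨(j : ℕ) + 1, Nat.add_lt_of_lt_sub j.isLt⟩ - μ (Fin.castLE (Nat.sub_le n 1) j)|
           + (∑ i ∈ univ.filter (fun i : Fin n => (i : ℕ) ≤ (j : ℕ)), (y i - ybar))
             * (μ ⟨(j : ℕ) + 1, Nat.add_lt_of_lt_sub j.isLt⟩ - μ (Fin.castLE (Nat.sub_le n 1) j)))) := by
  set A : ℕ → ℝ := fun i => if h : i < n then y ⟨i, h⟩ - ybar else 0 with hA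
  set M : ℕ → ℝ := fun i => if h : i < n then μ ⟨i, h⟩ else 0 with hM
  have hA0 : ∑ i ∈ range n, A i = 0 := by
    rw [← Fin.sum_univ_eq_sum_range A n] at *
    rw [← ha]
    exact Finset.sum_congr rfl fun i _ => by simp [hA, i.isLt]
  -- step 1: cross term via Abel
  have habel := abel_aux n A M hA0
  have hcross : ∑ i, (y i - ybar) * μ i
      = -∑ j : Fin (n - 1),
          (∑ i ∈ univ.filter (fun i : Fin n => (i : ℕ) ≤ (j : ℕ)), (y i - ybar))
            * (μ ⟨(j : ℕ) + 1, Nat.add_lt_of_lt_sub j.isLt⟩ - μ (Fin.castLE (Nat.sub_le n 1) j)) := by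
    have h1 : ∑ i, (y i - ybar) * μ i = ∑ i ∈ range n, A i * M i := by
      rw [← Fin.sum_univ_eq_sum_range (fun i => A i * M i) n]
      exact Finset.sum_congr rfl fun i _ => by simp [hA, hM, i.isLt]
    have h2 : ∑ j : Fin (n - 1),
          (∑ i ∈ univ.filter (fun i : Fin n => (i : ℕ) ≤ (j : ℕ)), (y i - ybar))
            * (μ ⟨(j : ℕ) + 1, Nat.add_lt_of_lt_sub j.isLt⟩ - μ (Fin.castLE (Nat.sub_le n 1) j))
        = ∑ j ∈ range (n - 1), (∑ i ∈ range (j + 1), A i) * (M (j + 1) - M j) := by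
      rw [← Fin.sum_univ_eq_sum_range
        (fun j : ℕ => (∑ i ∈ range (j + 1), A i) * (M (j + 1) - M j)) (n - 1)]
      refine Finset.sum_congr rfl fun j _ => ?_
      have hj1 : (j : ℕ) + 1 < n := Nat.add_lt_of_lt_sub j.isLt
      have hj0 : (j : ℕ) < n := by omega
      rw [filter_aux n (j : ℕ) hj0 (fun i => y i - ybar)]
      simp only [hM, dif_pos hj1, dif_pos hj0]
      congr 1

    rw [h1, h2, habel]
  -- step 2: expand squares
  have hexp : ∑ i, (y i - μ i) ^ 2
      = ∑ i, (y i - ybar) ^ 2 + ∑ i, (μ i - ybar) ^ 2 - 2 * ∑ i, (y i - ybar) * μ i := by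
    have h0 : ∑ i, (y i - ybar) * ybar = 0 := by
      rw [← Finset.sum_mul, ha, zero_mul]
    have : ∑ i, (y i - μ i) ^ 2
        = ∑ i, ((y i - ybar) ^ 2 + (μ i - ybar) ^ 2 - 2 * ((y i - ybar) * μ i) + 2 * ((y i - ybar) * ybar)) := by
      exact Finset.sum_congr rfl fun i _ => by ring
    rw [this]
    simp only [Finset.sum_add_distrib, Finset.sum_sub_distrib, ← Finset.mul_sum, h0]
    ring
  rw [hexp, hcross, Finset.mul_sum]
  rw [Finset.sum_add_distrib]
  ring

/-- First knot of the fused-lasso path via CUSUM: for `λ > 0`, the constant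
vector `ȳ 𝟙` minimizes `½‖y-μ‖² + λ‖Dμ‖₁` if and only if
`λ ≥ λ₁ = max_k |∑_{i=1}^k (y_i - ȳ)|`. -/
theorem fused_lasso_first_knot (n : ℕ) (hn : 2 ≤ n) (y : Fin n → ℝ)
    (ybar : ℝ) (hybar : ybar = (1 / (n : ℝ)) * ∑ i, y i)
    (f : ℝ → (Fin n → ℝ) → ℝ)
    (hf : f = fun lam μ => (1 / 2) * ∑ i, (y i - μ i) ^ 2
      + lam * ∑ j : Fin (n - 1),
          |μ ⟨(j : ℕ) + 1, by have := j.isLt; omega⟩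
            - μ (Fin.castLE (Nat.sub_le n 1) j)|)
    (lam1 : ℝ)
    (hlam1 : lam1 = ⨆ k : Fin (n - 1),
      |∑ i ∈ univ.filter (fun i : Fin n => (i : ℕ) ≤ (k : ℕ)), (y i - ybar)|) :
    ∀ lam : ℝ, 0 < lam →
      (IsMinOn (f lam) Set.univ (fun _ => ybar) ↔ lam1 ≤ lam) := by
  intro lam hlam
  have hnR : (0 : ℝ) < (n : ℝ) := by positivity
  have ha : ∑ i, (y i - ybar) = 0 := by
    rw [Finset.sum_sub_distrib, Finset.sum_const, hybar]
    simp only [card_univ, Fintype.card_fin, nsmul_eq_mul]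
    field_simp
    ring
  -- abbreviations
  set S : Fin (n - 1) → ℝ :=
    fun k => ∑ i ∈ univ.filter (fun i : Fin n => (i : ℕ) ≤ (k : ℕ)), (y i - ybar) with hS
  have hne : Nonempty (Fin (n - 1)) := ⟨⟨0, by omega⟩⟩
  have hbdd : BddAbove (Set.range fun k => |S k|) :=
    Set.Finite.bddAbove (Set.finite_range _)
  -- f at the constant vector
  have hfc : f lam (fun _ => ybar) = (1 / 2) * ∑ i, (y i - ybar) ^ 2 := by
    rw [hf]; simp
  constructor
  · -- minimality → lam1 ≤ lam
    intro hmin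
    rw [hlam1]
    apply ciSup_le
    intro k
    by_contra hcon
    push_neg at hcon
    -- build perturbation
    set σ : ℝ := if 0 ≤ S k then 1 else -1 with hσ
    have hσS : σ * S k = |S k| := by
      by_cases h : 0 ≤ S k
      · rw [hσ, if_pos h, one_mul, abs_of_nonneg h]
      · rw [hσ, if_neg h, abs_of_neg (lt_of_not_ge h)]; ring
    have hσabs : |σ| = 1 := by
      by_cases h : 0 ≤ S k <;> simp [hσ, h]
    have hσsq : σ ^ 2 = 1 := by
      have := sq_abs σ; rw [hσabs] at this; linarith [this]
    set t : ℝ := (|S k| - lam) / n with ht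
    have htpos : 0 < t := by
      apply div_pos (by linarith) hnR
    set μ : Fin n → ℝ := fun i => if (i : ℕ) ≤ (k : ℕ) then ybar else ybar - t * σ with hμ
    have hkey := key_identity n hn y ybar ha lam μ
    -- squares bound
    have hsq : ∑ i, (μ i - ybar) ^ 2 ≤ n * t ^ 2 := by
      calc ∑ i, (μ i - ybar) ^ 2 ≤ ∑ _i : Fin n, t ^ 2 := by
            apply Finset.sum_le_sum
            intro i _
            by_cases h : (i : ℕ) ≤ (k : ℕ)
            · simp [hμ, h]; positivity
            · simp only [hμ, if_neg h]
              have : (ybar - t * σ - ybar) ^ 2 = t ^ 2 * σ ^ 2 := by ring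
              rw [this, hσsq, mul_one]
        _ = n * t ^ 2 := by simp [mul_comm]
    -- penalty sum collapses to the k term
    have hterm : ∀ j : Fin (n - 1),
        (lam * |μ ⟨(j : ℕ) + 1, by have := j.isLt; omega⟩ - μ (Fin.castLE (Nat.sub_le n 1) j)|
          + S j * (μ ⟨(j : ℕ) + 1, by have := j.isLt; omega⟩ - μ (Fin.castLE (Nat.sub_le n 1) j)))
        = if j = k then t * (lam - |S k|) else 0 := by
      intro j
      have hcast : ((Fin.castLE (Nat.sub_le n 1) j : Fin n) : ℕ) = (j : ℕ) := rfl
      by_cases hjk : j = k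
      · subst hjk
        have h1 : ¬ ((j : ℕ) + 1 ≤ (j : ℕ)) := by omega
        have h2 : ((Fin.castLE (Nat.sub_le n 1) j : Fin n) : ℕ) ≤ (j : ℕ) := le_of_eq hcast
        rw [if_pos rfl]
        simp only [hμ, if_neg h1, if_pos h2]
        have hd : ybar - t * σ - ybar = -(t * σ) := by ring
        rw [hd, abs_neg, abs_mul, abs_of_pos htpos, hσabs]
        have : S j * -(t * σ) = -(t * (σ * S j)) := by ring
        rw [this, hσS]
        ring
      · rw [if_neg hjk]
        have hne' : (j : ℕ) ≠ (k : ℕ) := fun h => hjk (Fin.ext h)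
        have : ((j : ℕ) + 1 ≤ (k : ℕ)) ↔ ((j : ℕ) ≤ (k : ℕ)) := by omega
        by_cases h : (j : ℕ) ≤ (k : ℕ)
        · simp [hμ, h, this.mpr h, hcast]
        · have h1 : ¬ ((j : ℕ) + 1 ≤ (k : ℕ)) := fun hh => h (this.mp hh)
          simp [hμ, h, h1, hcast]
    have hpen : ∑ j : Fin (n - 1),
        (lam * |μ ⟨(j : ℕ) + 1, by have := j.isLt; omega⟩ - μ (Fin.castLE (Nat.sub_le n 1) j)|
          + S j * (μ ⟨(j : ℕ) + 1, by have := j.isLt; omega⟩ - μ (Fin.castLE (Nat.sub_le n 1) j)))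
        = t * (lam - |S k|) := by
      rw [Finset.sum_congr rfl fun j _ => hterm j]
      simp
    -- conclude strict decrease
    have hntt : (n : ℝ) * t = |S k| - lam := by
      rw [ht]; field_simp
    have hfval : f lam μ ≤ f lam (fun _ => ybar) - (1 / 2) * (t * (|S k| - lam)) := by
      rw [hf] at hfc ⊢
      simp only at hkey hfc ⊢
      rw [hkey, hpen, hfc]
      have : (1 : ℝ) / 2 * ∑ i, (μ i - ybar) ^ 2 ≤ (1 / 2) * (n * t ^ 2) := by linarith
      have h2 : (n : ℝ) * t ^ 2 = (|S k| - lam) * t := by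
        rw [pow_two, ← mul_assoc, hntt]
      nlinarith [this]
    have hlt : f lam μ < f lam (fun _ => ybar) := by
      have : 0 < (1 / 2) * (t * (|S k| - lam)) := by
        apply mul_pos (by norm_num) (mul_pos htpos (by linarith))
      linarith
    have := isMinOn_iff.mp hmin μ (Set.mem_univ μ)
    linarith
  · -- lam1 ≤ lam → minimality
    intro hle
    rw [isMinOn_iff]
    intro μ _
    have hSk : ∀ k, |S k| ≤ lam := by
      intro k
      refine le_trans ?_ hle
      rw [hlam1]
      exact le_ciSup hbdd k
    have hkey := key_identity n hn y ybar ha lam μ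
    rw [hf]
    simp only
    rw [hfc] at *
    rw [hkey]
    have h0 : lam * ∑ _x : Fin (n - 1), |ybar - ybar| = 0 := by simp
    have h1 : 0 ≤ (1 / 2) * ∑ i, (μ i - ybar) ^ 2 := by positivity
    have h2 : 0 ≤ ∑ j : Fin (n - 1),
        (lam * |μ ⟨(j : ℕ) + 1, by have := j.isLt; omega⟩ - μ (Fin.castLE (Nat.sub_le n 1) j)|
          + S j * (μ ⟨(j : ℕ) + 1, by have := j.isLt; omega⟩ - μ (Fin.castLE (Nat.sub_le n 1) j))) := by
      apply Finset.sum_nonneg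
      intro j _
      set d := μ ⟨(j : ℕ) + 1, by have := j.isLt; omega⟩ - μ (Fin.castLE (Nat.sub_le n 1) j)
      have habs : S j * d ≥ -(|S j| * |d|) := by
        have := neg_abs_le (S j * d)
        rw [abs_mul] at this
        linarith
      have : (lam - |S j|) * |d| ≥ 0 :=
        mul_nonneg (by linarith [hSk j]) (abs_nonneg d)
      nlinarith
    linarith
end
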